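/- The normalized antisymmetric projector ρ_as = P_as/6 on ℂ⁴ ⊗ ℂ⁴, where P_as = (I₁₆ − V)/2 with V the swap operator, has Bloch-diagonal coefficients λ_1 = 1/4 and λ_k = −1/12 for k = 2,…,16; hence its CCNR value equals 1/4 + 15·(1/12) = 3/2. -/

import Mathlib

open Matrix Kronecker

/-- The Pauli matrices: `σp 0 = I`, `σp 1 = X`, `σp 2 = Y`, `σp 3 = Z`. -/
noncomputable def σp : Fin 4 → Matrix (Fin 2) (Fin 2) ℂ
  | 0 => 1
  | 1 => !![0, 1; 1, 0]
  | 2 => !![0, -Complex.I; Complex.I, 0]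
  | 3 => !![1, 0; 0, -1]

/-- The normalized Pauli products `A_k = (1/2) σ_{k₀} ⊗ σ_{k₁}`, viewed as 4×4 matrices. -/
noncomputable def Ap (k : Fin 4 × Fin 4) : Matrix (Fin 2 × Fin 2) (Fin 2 × Fin 2) ℂ :=
  (1/2 : ℂ) • (σp k.1 ⊗ₖ σp k.2)

/-- The swap operator `V = Σ_{i,j} |ji⟩⟨ij|` on `ℂ⁴ ⊗ ℂ⁴`. -/
noncomputable def swapV :
    Matrix ((Fin 2 × Fin 2) × (Fin 2 × Fin 2)) ((Fin 2 × Fin 2) × (Fin 2 × Fin 2)) ℂ :=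
  fun p q => if p.1 = q.2 ∧ p.2 = q.1 then 1 else 0

/-- The normalized antisymmetric projector `ρ_as = P_as/6`, `P_as = (I − V)/2`. -/
noncomputable def rhoAS :
    Matrix ((Fin 2 × Fin 2) × (Fin 2 × Fin 2)) ((Fin 2 × Fin 2) × (Fin 2 × Fin 2)) ℂ :=
  (1/6 : ℂ) • ((1/2 : ℂ) • ((1 : Matrix ((Fin 2 × Fin 2) × (Fin 2 × Fin 2))
    ((Fin 2 × Fin 2) × (Fin 2 × Fin 2)) ℂ) - swapV))

lemma swap_trace (A B : Matrix (Fin 2 × Fin 2) (Fin 2 × Fin 2) ℂ) :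
    (swapV * (A ⊗ₖ B)).trace = (A * B).trace := by
  simp only [Matrix.trace, Matrix.diag_apply, Matrix.mul_apply, swapV,
    kroneckerMap_apply, Fintype.sum_prod_type, Fin.sum_univ_two]
  simp only [Prod.mk.injEq, ite_mul, one_mul, zero_mul]
  norm_num
  ring

lemma trace_σ (i : Fin 4) : (σp i).trace = if i = 0 then 2 else 0 := by
  fin_cases i <;> simp [σp, Matrix.trace, Fin.sum_univ_two, Matrix.one_apply]

lemma trace_σσ (i : Fin 4) : (σp i * σp i).trace = 2 := by
  fin_cases i <;>
    simp [σp, Matrix.trace, Matrix.mul_apply, Fin.sum_univ_two, Matrix.one_apply] <;>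
    norm_num

lemma rho_trace_key (A B : Matrix (Fin 2 × Fin 2) (Fin 2 × Fin 2) ℂ) :
    (rhoAS * (A ⊗ₖ B)).trace
      = (1/12 : ℂ) * (A.trace * B.trace - (A * B).trace) := by
  simp [rhoAS, Matrix.sub_mul, Matrix.smul_mul, Matrix.trace_sub, Matrix.trace_smul,
    swap_trace, Matrix.trace_kronecker]
  ring

/-- The antisymmetric Werner state `ρ_as = P_as/6` on `ℂ⁴ ⊗ ℂ⁴` has Bloch-diagonal
coefficients `λ₁ = 1/4` and `λ_k = −1/12` otherwise; its CCNR value is `3/2`. -/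
theorem antisymmetric_werner_ccnr :
    (∀ k : Fin 4 × Fin 4, (rhoAS * (Ap k ⊗ₖ Ap k)).trace
        = if k = (0, 0) then (1/4 : ℂ) else (-1/12 : ℂ)) ∧
    ∑ k : Fin 4 × Fin 4, ‖(rhoAS * (Ap k ⊗ₖ Ap k)).trace‖ = 3/2 := by
  have hA : ∀ k : Fin 4 × Fin 4,
      (Ap k).trace = (1/2 : ℂ) * ((σp k.1).trace * (σp k.2).trace) := by
    intro k; simp [Ap, Matrix.trace_smul, Matrix.trace_kronecker]
  have hAA : ∀ k : Fin 4 × Fin 4, (Ap k * Ap k).trace = 1 := by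
    intro k
    simp [Ap, Matrix.smul_mul, Matrix.mul_smul, ← Matrix.mul_kronecker_mul,
      Matrix.trace_smul, Matrix.trace_kronecker, trace_σσ]
  have h : ∀ k : Fin 4 × Fin 4, (rhoAS * (Ap k ⊗ₖ Ap k)).trace
      = if k = (0, 0) then (1/4 : ℂ) else (-1/12 : ℂ) := by
    intro k
    rw [rho_trace_key, hA, hAA, trace_σ, trace_σ]
    rcases k with ⟨a, b⟩
    by_cases h1 : a = 0 <;> by_cases h2 : b = 0 <;>
      simp [h1, h2, Prod.ext_iff] <;> norm_num
  refine ⟨h, ?_⟩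
  simp only [h, apply_ite (‖·‖ : ℂ → ℝ)]
  have e1 : ‖(1/4 : ℂ)‖ = 1/4 := by
    simp [map_div₀]
  have e2 : ‖(-1/12 : ℂ)‖ = 1/12 := by
    rw [show (-1/12 : ℂ) = -(1/12) by ring, norm_neg]
    simp [map_div₀]
  rw [e1, e2]
  simp [Fintype.sum_prod_type, Fin.sum_univ_four, Prod.ext_iff]
  norm_num
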